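/- Let G be a bridgeless cubic graph. Then ω(G) ≤ 2·dn(G), where ω(G) is the oddness of G (the minimum number of odd circuits in a 2-factor of G) and dn(G) is the density (the minimum of |M_1 ∩ M_2| over pairs of perfect matchings M_1, M_2 of G). -/

import Mathlib

open SimpleGraph Finset

/-- `M` is (the edge set of) a perfect matching of `G`. -/
def IsPerfectMatchingSet {V : Type*} (G : SimpleGraph V) (M : Finset (Sym2 V)) : Prop :=
  (↑M : Set (Sym2 V)) ⊆ G.edgeSet ∧ ∀ v : V, ∃! e, e ∈ M ∧ v ∈ e

/-- The number of odd components (components with an odd number of vertices) of `H`. -/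
noncomputable def oddComponentsCount {V : Type*} (H : SimpleGraph V) : ℕ :=
  Nat.card {c : H.ConnectedComponent // Odd (Nat.card c.supp)}

/-- The oddness of a (bridgeless cubic) graph: the minimum number of odd circuits in a
2-factor, a 2-factor being the complement of a perfect matching. -/
noncomputable def oddness {V : Type*} (G : SimpleGraph V) : ℕ :=
  sInf {n | ∃ M : Finset (Sym2 V), IsPerfectMatchingSet G M ∧
    n = oddComponentsCount (G.deleteEdges ↑M)}

/-- The density of `G`: the minimum number of common edges of two perfect matchings. -/
noncomputable def density {V : Type*} [DecidableEq V] (G : SimpleGraph V) : ℕ :=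
  sInf {n | ∃ M₁ M₂ : Finset (Sym2 V), IsPerfectMatchingSet G M₁ ∧
    IsPerfectMatchingSet G M₂ ∧ n = (M₁ ∩ M₂).card}

private lemma mem_out_aux {V : Type*} (e : Sym2 V) (v : V) (h : v ∈ e) :
    v = (Quot.out e).1 ∨ v = (Quot.out e).2 := by
  have h2 : e = s((Quot.out e).1, (Quot.out e).2) := by
    exact (Quot.out_eq e).symm
  rw [h2, Sym2.mem_iff] at h
  exact h

/-- Key counting lemma: the number of odd components of the complement of the perfect
matching `M₁` is at most `2 * (M₁ ∩ M₂).card` for any other perfect matching `M₂`. -/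
private lemma key_lemma {V : Type*} [Fintype V] [DecidableEq V] (G : SimpleGraph V)
    (M₁ M₂ : Finset (Sym2 V)) (h₁ : IsPerfectMatchingSet G M₁)
    (h₂ : IsPerfectMatchingSet G M₂) :
    oddComponentsCount (G.deleteEdges ↑M₁) ≤ 2 * (M₁ ∩ M₂).card := by
  classical
  set H := G.deleteEdges (↑M₁ : Set (Sym2 V)) with hH
  have hf : ∀ v : V, ∃ e, e ∈ M₂ ∧ v ∈ e ∧ ∀ e', e' ∈ M₂ → v ∈ e' → e' = e := by
    intro v
    obtain ⟨e, ⟨he1, he2⟩, hu⟩ := h₂.2 v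
    exact ⟨e, he1, he2, fun e' hm hv => hu e' ⟨hm, hv⟩⟩
  choose f hfM hfv hfu using hf
  -- Step 1: every odd component contains a vertex whose `M₂`-edge lies in `M₁`.
  have step1 : ∀ c : H.ConnectedComponent, Odd (Nat.card c.supp) →
      ∃ v, v ∈ c.supp ∧ f v ∈ M₁ := by
    intro c hodd
    by_contra hcon
    push_neg at hcon
    -- the `M₂`-edges at vertices of `c` form a perfect matching of `c.supp` inside `H`
    have hadjH : ∀ a b : V, a ∈ c.supp → s(a, b) ∈ M₂ → H.Adj a b := by
      intro a b ha hab
      have hG : G.Adj a b := (G.mem_edgeSet).mp (h₂.1 hab)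
      have hfa : s(a, b) = f a := hfu a _ hab (Sym2.mem_mk_left a b)
      have hnot : s(a, b) ∉ (↑M₁ : Set (Sym2 V)) := by
        rw [hfa]; exact_mod_cast hcon a ha
      exact SimpleGraph.deleteEdges_adj.mpr ⟨hG, hnot⟩
    set N : H.Subgraph :=
      { verts := c.supp
        Adj := fun a b => a ∈ c.supp ∧ b ∈ c.supp ∧ s(a, b) ∈ M₂
        adj_sub := fun ⟨ha, _, hab⟩ => hadjH _ _ ha hab
        edge_vert := fun ⟨ha, _, _⟩ => ha
        symm := ⟨fun a b ⟨ha, hb, hab⟩ => ⟨hb, ha, by rwa [Sym2.eq_swap]⟩⟩ } with hN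
    have hmatch : N.IsMatching := by
      intro v hv
      have hv' : v ∈ c.supp := hv
      obtain ⟨w, hw⟩ := Sym2.mem_iff_exists.mp (hfv v)
      have hvwM₂ : s(v, w) ∈ M₂ := hw ▸ hfM v
      have hwsupp : w ∈ c.supp := by
        have hadj : H.Adj v w := hadjH v w hv' hvwM₂
        rw [SimpleGraph.ConnectedComponent.mem_supp_iff] at hv' ⊢
        rw [← hv']
        exact SimpleGraph.ConnectedComponent.sound hadj.symm.reachable
      refine ⟨w, ⟨hv', hwsupp, hvwM₂⟩, ?_⟩
      rintro w' ⟨-, -, hw'⟩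
      have : s(v, w') = s(v, w) := by
        rw [hfu v _ hw' (Sym2.mem_mk_left v w'), hw]
      exact Sym2.congr_right.mp this
    letI : Fintype N.verts := Fintype.ofFinite _
    have heven := hmatch.even_card
    have hcard : Nat.card c.supp = N.verts.toFinset.card := by
      rw [Set.toFinset_card, Nat.card_eq_fintype_card]
    rw [← Nat.not_even_iff_odd, hcard] at hodd
    exact hodd heven
  -- Step 2: inject odd components into `(M₁ ∩ M₂) × Bool`.
  choose vc hvc hvcM using step1
  let j : {c : H.ConnectedComponent // Odd (Nat.card c.supp)} → {e // e ∈ M₁ ∩ M₂} × Bool :=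
    fun c =>
      (⟨f (vc c.1 c.2), Finset.mem_inter.mpr ⟨hvcM c.1 c.2, hfM _⟩⟩,
        decide (vc c.1 c.2 = (Quot.out (f (vc c.1 c.2))).1))
  have hinj : Function.Injective j := by
    intro c d hcd
    have h1 : f (vc c.1 c.2) = f (vc d.1 d.2) := congrArg (fun p => p.1.1) hcd
    have h2 : decide (vc c.1 c.2 = (Quot.out (f (vc c.1 c.2))).1)
        = decide (vc d.1 d.2 = (Quot.out (f (vc d.1 d.2))).1) := congrArg (fun p => p.2) hcd
    have hvv : vc c.1 c.2 = vc d.1 d.2 := by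
      rw [← h1] at h2
      have hmc := mem_out_aux _ _ (hfv (vc c.1 c.2))
      have hmd' : vc d.1 d.2 ∈ f (vc c.1 c.2) := by rw [h1]; exact hfv _
      have hmd := mem_out_aux _ _ hmd'
      have hiff := decide_eq_decide.mp h2
      rcases hmc with hc | hc <;> rcases hmd with hd | hd
      · rw [hc, hd]
      · rw [hc, hiff.mp hc]
      · rw [hiff.mpr hd, hd]
      · rw [hc, hd]
    have hc : c.1 = d.1 := by
      rw [← (SimpleGraph.ConnectedComponent.mem_supp_iff _ _).mp (hvc c.1 c.2),
        ← (SimpleGraph.ConnectedComponent.mem_supp_iff _ _).mp (hvc d.1 d.2), hvv]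
    exact Subtype.ext hc
  have hle := Nat.card_le_card_of_injective j hinj
  have hcardb : Nat.card ({e // e ∈ M₁ ∩ M₂} × Bool) = 2 * (M₁ ∩ M₂).card := by
    simp only [Nat.card_eq_fintype_card, Fintype.card_prod, Fintype.card_bool,
      Fintype.card_coe]
    ring
  rw [oddComponentsCount]
  omega

/-- For every bridgeless cubic graph `G`, `ω(G) ≤ 2·dn(G)`: the oddness is at most
twice the density. -/
theorem oddness_le_two_mul_density
    {V : Type*} [Fintype V] [DecidableEq V]
    (G : SimpleGraph V) [DecidableRel G.Adj]
    (hcubic : ∀ v : V, G.degree v = 3)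
    (hbridgeless : ∀ e ∈ G.edgeSet, ¬ G.IsBridge e) :
    oddness G ≤ 2 * density G := by
  classical
  by_cases hS : {n | ∃ M₁ M₂ : Finset (Sym2 V), IsPerfectMatchingSet G M₁ ∧
      IsPerfectMatchingSet G M₂ ∧ n = (M₁ ∩ M₂).card}.Nonempty
  · obtain ⟨M₁, M₂, h₁, h₂, hcard⟩ := Nat.sInf_mem hS
    calc oddness G ≤ oddComponentsCount (G.deleteEdges ↑M₁) :=
          Nat.sInf_le ⟨M₁, h₁, rfl⟩
      _ ≤ 2 * (M₁ ∩ M₂).card := key_lemma G M₁ M₂ h₁ h₂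
      _ = 2 * density G := by rw [density, ← hcard]
  · have h1 : {n | ∃ M : Finset (Sym2 V), IsPerfectMatchingSet G M ∧
        n = oddComponentsCount (G.deleteEdges ↑M)} = ∅ := by
      rw [Set.eq_empty_iff_forall_notMem]
      rintro n ⟨M, hM, -⟩
      exact hS ⟨(M ∩ M).card, M, M, hM, hM, rfl⟩
    rw [oddness, h1, Nat.sInf_empty]
    exact Nat.zero_le _
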